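/- Let (E,w,d) be an ultra triple on a finite ground set E and let r be a non-negative integer. Let 𝓕_r be the collection of subsets A ⊆ E such that per_r(A) ≥ per_r(B) for all B ⊆ E with |B| = |A|. Then 𝓕_r is a strong greedoid: (i) ∅ ∈ 𝓕_r; (ii) if A ∈ 𝓕_r is nonempty then there is a ∈ A with A \ {a} ∈ 𝓕_r; (iii) if A, B ∈ 𝓕_r with |A| = |B| + 1 then there is a ∈ A \ B with B ∪ {a} ∈ 𝓕_r; (iv) moreover, in (iii) one can choose a ∈ A \ B such that both B ∪ {a} ∈ 𝓕_r and A \ {a} ∈ 𝓕_r. -/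

import Mathlib

set_option linter.unusedSectionVars false
open Finset

noncomputable def distR {E : Type*} [DecidableEq E] (d : E → E → ℝ) (r : ℕ)
    (C : Finset E) (v : E) : ℝ :=
  if C.card ≤ r then 0
  else sSup {s : ℝ | ∃ A ⊆ C, A.card = C.card - r ∧ s = ∑ x ∈ A, d v x}

section Aux
variable {E : Type*} [DecidableEq E] (d : E → E → ℝ) (r : ℕ)

lemma distR_set_eq (C : Finset E) (v : E) :
    {s : ℝ | ∃ A ⊆ C, A.card = C.card - r ∧ s = ∑ x ∈ A, d v x} =
      ↑((C.powersetCard (C.card - r)).image (fun A => ∑ x ∈ A, d v x)) := by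
  ext s
  simp only [Set.mem_setOf_eq, coe_image, Set.mem_image, mem_coe, mem_powersetCard]
  constructor
  · rintro ⟨A, hA, hc, rfl⟩; exact ⟨A, ⟨hA, hc⟩, rfl⟩
  · rintro ⟨A, ⟨hA, hc⟩, rfl⟩; exact ⟨A, hA, hc, rfl⟩

lemma le_distR {C : Finset E} {v : E} {A : Finset E} (hA : A ⊆ C)
    (hc : A.card = C.card - r) : ∑ x ∈ A, d v x ≤ distR d r C v := by
  unfold distR
  split_ifs with h
  · have : A = ∅ := card_eq_zero.mp (by omega)
    simp [this]
  · rw [distR_set_eq]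
    have hne : ((C.powersetCard (C.card - r)).image (fun A => ∑ x ∈ A, d v x)).Nonempty :=
      Nonempty.image (powersetCard_nonempty.mpr (Nat.sub_le _ _)) _
    rw [hne.csSup_eq_max']
    apply le_max'
    exact mem_image_of_mem _ (mem_powersetCard.mpr ⟨hA, hc⟩)

lemma distR_exists (C : Finset E) (v : E) :
    ∃ A ⊆ C, A.card = C.card - r ∧ distR d r C v = ∑ x ∈ A, d v x := by
  unfold distR
  split_ifs with h
  · exact ⟨∅, empty_subset _, by rw [card_empty]; omega, by simp⟩
  · rw [distR_set_eq]
    have hne : ((C.powersetCard (C.card - r)).image (fun A => ∑ x ∈ A, d v x)).Nonempty :=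
      Nonempty.image (powersetCard_nonempty.mpr (Nat.sub_le _ _)) _
    rw [hne.csSup_eq_max']
    have := max'_mem _ hne
    rw [mem_image] at this
    obtain ⟨A, hA, hEq⟩ := this
    rw [mem_powersetCard] at hA
    exact ⟨A, hA.1, hA.2, hEq.symm⟩

lemma distR_of_card_le {C : Finset E} (h : C.card ≤ r) (v : E) : distR d r C v = 0 := by
  unfold distR; rw [if_pos h]

lemma distR_zero (C : Finset E) (v : E) : distR d 0 C v = ∑ x ∈ C, d v x := by
  obtain ⟨A, hA, hc, hEq⟩ := distR_exists d 0 C v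
  have : A = C := eq_of_subset_of_card_le hA (by omega)
  rw [hEq, this]



lemma distR_insert_eq {a b : E} {C : Finset E} (hb : b ∉ C) (hr1 : 1 ≤ r)
    (hrn : r ≤ C.card) :
    distR d r (insert b C) a = max (distR d (r-1) C a) (d a b + distR d r C a) := by
  have hcard : (insert b C).card = C.card + 1 := card_insert_of_notMem hb
  apply le_antisymm
  · obtain ⟨A', hsub, hc, hEq⟩ := distR_exists d r (insert b C) a
    rw [hcard] at hc
    rw [hEq]
    by_cases hbA : b ∈ A'
    · have herase : (A'.erase b) ⊆ C := by
        intro x hx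
        have hx1 := mem_of_mem_erase hx
        have hx2 := ne_of_mem_erase hx
        rcases mem_insert.mp (hsub hx1) with h | h
        · exact absurd h hx2
        · exact h
      have hce : (A'.erase b).card = C.card - r := by
        rw [card_erase_of_mem hbA]; omega
      have hsum : ∑ x ∈ A', d a x = d a b + ∑ x ∈ A'.erase b, d a x :=
        (Finset.add_sum_erase _ _ hbA).symm
      rw [hsum]
      have h1 : ∑ x ∈ A'.erase b, d a x ≤ distR d r C a := le_distR d r (v := a) herase hce
      exact le_max_of_le_right (by linarith)
    · have hsub' : A' ⊆ C := by
        intro x hx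
        rcases mem_insert.mp (hsub hx) with h | h
        · exact absurd (h ▸ hx) hbA
        · exact h
      exact le_max_of_le_left (le_distR d (r-1) hsub' (by omega))
  · apply max_le
    · obtain ⟨A, hsub, hc, hEq⟩ := distR_exists d (r-1) C a
      rw [hEq]
      exact le_distR d r (hsub.trans (subset_insert _ _)) (by rw [hcard]; omega)
    · obtain ⟨A, hsub, hc, hEq⟩ := distR_exists d r C a
      have hbA : b ∉ A := fun h => hb (hsub h)
      have : d a b + ∑ x ∈ A, d a x = ∑ x ∈ insert b A, d a x := (sum_insert hbA).symm
      rw [hEq, this]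
      exact le_distR d r (insert_subset_insert _ hsub)
        (by rw [card_insert_of_notMem hbA, hcard]; omega)

lemma key_ineq (hsymm : ∀ a b : E, a ≠ b → d a b = d b a)
    (hultra : ∀ a b c : E, a ≠ b → a ≠ c → b ≠ c → d a b ≤ max (d a c) (d b c))
    {a b : E} {C : Finset E} (hr1 : 1 ≤ r) (ha : a ∉ C) (hb : b ∉ C) (hab : a ≠ b) :
    distR d (r-1) C a + distR d r C b ≤
      max (distR d (r-1) C b + distR d r C a) (d a b + distR d r C a + distR d r C b) := by
  by_cases hn : C.card ≤ r - 1
  · rw [distR_of_card_le d (r-1) hn, distR_of_card_le d (r-1) hn,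
      distR_of_card_le d r (by omega), distR_of_card_le d r (by omega)]
    simpa using le_max_left (0:ℝ) (d a b)
  · push_neg at hn
    obtain ⟨A, hAsub, hAc, hAeq⟩ := distR_exists d (r-1) C a
    by_cases hc : ∃ x ∈ A, d a x ≤ d a b
    · obtain ⟨x₀, hx₀A, hx₀⟩ := hc
      have hsum : ∑ x ∈ A, d a x = d a x₀ + ∑ x ∈ A.erase x₀, d a x :=
        (Finset.add_sum_erase _ _ hx₀A).symm
      have h1 : ∑ x ∈ A.erase x₀, d a x ≤ distR d r C a :=
        le_distR d r ((erase_subset _ _).trans hAsub)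
          (by rw [card_erase_of_mem hx₀A]; omega)
      apply le_max_of_le_right
      rw [hAeq, hsum]
      linarith
    · push_neg at hc
      have hax : ∀ x ∈ A, d a x ≤ d b x := by
        intro x hx
        have hxC := hAsub hx
        have h1 : d a x ≤ max (d a b) (d x b) :=
          hultra a x b (fun h => ha (h ▸ hxC)) hab (fun h => hb (h ▸ hxC))
        have h2 : d a b < d a x := hc x hx
        have h3 : d x b = d b x := hsymm x b (fun h => hb (h ▸ hxC))
        rcases max_cases (d a b) (d x b) with ⟨hm, _⟩ | ⟨hm, _⟩ <;> rw [hm] at h1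
        · linarith
        · linarith [h3 ▸ h1]
      obtain ⟨A', hA'sub, hA'c, hA'eq⟩ := distR_exists d r C b
      have hex : ∃ x₀ ∈ A, x₀ ∉ A' := by
        by_contra h
        push_neg at h
        have := card_le_card h
        omega
      obtain ⟨x₀, hx₀A, hx₀A'⟩ := hex
      have hsum : ∑ x ∈ A, d a x = d a x₀ + ∑ x ∈ A.erase x₀, d a x :=
        (Finset.add_sum_erase _ _ hx₀A).symm
      have h1 : ∑ x ∈ A.erase x₀, d a x ≤ distR d r C a :=
        le_distR d r ((erase_subset _ _).trans hAsub)
          (by rw [card_erase_of_mem hx₀A]; omega)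
      have h2 : d b x₀ + ∑ x ∈ A', d b x = ∑ x ∈ insert x₀ A', d b x := (sum_insert hx₀A').symm
      have h3 : ∑ x ∈ insert x₀ A', d b x ≤ distR d (r-1) C b :=
        le_distR d (r-1) (insert_subset (hAsub hx₀A) hA'sub)
          (by rw [card_insert_of_notMem hx₀A']; omega)
      apply le_max_of_le_left
      have h4 : d a x₀ ≤ d b x₀ := hax x₀ hx₀A
      rw [hAeq, hsum, hA'eq]
      linarith

lemma distR_exchange (hsymm : ∀ a b : E, a ≠ b → d a b = d b a)
    (hultra : ∀ a b c : E, a ≠ b → a ≠ c → b ≠ c → d a b ≤ max (d a c) (d b c))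
    {a b : E} {C : Finset E} (ha : a ∉ C) (hb : b ∉ C) (hab : a ≠ b) :
    distR d r C a + distR d r (insert a C) b = distR d r C b + distR d r (insert b C) a := by
  rcases Nat.eq_zero_or_pos r with hr0 | hr1
  · subst hr0
    rw [distR_zero, distR_zero, distR_zero, distR_zero]
    rw [sum_insert ha, sum_insert hb]
    rw [hsymm b a hab.symm]
    ring
  · by_cases hn : C.card < r
    · have e1 : distR d r C a = 0 := distR_of_card_le d r (by omega) a
      have e2 : distR d r C b = 0 := distR_of_card_le d r (by omega) b
      have e3 : distR d r (insert a C) b = 0 :=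
        distR_of_card_le d r (by rw [card_insert_of_notMem ha]; omega) b
      have e4 : distR d r (insert b C) a = 0 :=
        distR_of_card_le d r (by rw [card_insert_of_notMem hb]; omega) a
      rw [e1, e2, e3, e4]
    · push_neg at hn
      rw [distR_insert_eq d r ha hr1 hn, distR_insert_eq d r hb hr1 hn]
      have hba : d b a = d a b := hsymm b a hab.symm
      rw [hba]
      have k1 := key_ineq d r hsymm hultra hr1 ha hb hab
      have k2 := key_ineq d r hsymm hultra hr1 hb ha hab.symm
      rw [hba] at k2
      rcases le_max_iff.mp k1 with h1 | h1 <;> rcases le_max_iff.mp k2 with h2 | h2 <;>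
        rw [max_def, max_def] <;> split_ifs <;> linarith
end Aux

noncomputable def perList {E : Type*} [DecidableEq E] (w : E → ℝ) (d : E → E → ℝ)
    (r : ℕ) : List E → ℝ
  | [] => 0
  | a :: l => perList w d r l + w a + distR d r l.toFinset a

noncomputable def perR {E : Type*} [DecidableEq E] (w : E → ℝ) (d : E → E → ℝ)
    (r : ℕ) (A : Finset E) : ℝ := perList w d r A.toList

section Aux2
variable {E : Type*} [DecidableEq E] (w : E → ℝ) (d : E → E → ℝ) (r : ℕ)
variable (hsymm : ∀ a b : E, a ≠ b → d a b = d b a)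
    (hultra : ∀ a b c : E, a ≠ b → a ≠ c → b ≠ c → d a b ≤ max (d a c) (d b c))

include hsymm hultra in
lemma perList_perm : ∀ {l₁ l₂ : List E}, l₁.Perm l₂ → l₁.Nodup →
    perList w d r l₁ = perList w d r l₂ := by
  intro l₁ l₂ h
  induction h with
  | nil => intro _; rfl
  | cons x h ih =>
    intro hnd
    rw [List.nodup_cons] at hnd
    show perList w d r _ + w x + distR d r _ x = perList w d r _ + w x + distR d r _ x
    rw [ih hnd.2, List.toFinset_eq_of_perm _ _ h]
  | swap x y l =>
    intro hnd
    rw [List.nodup_cons] at hnd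
    obtain ⟨hy, hnd⟩ := hnd
    rw [List.nodup_cons] at hnd
    obtain ⟨hx, hnd⟩ := hnd
    have hyx : y ≠ x := fun h => hy (h ▸ (List.mem_cons_self : x ∈ x :: l))
    have hyl : y ∉ l := fun h => hy (List.mem_cons_of_mem x h)
    have hyT : y ∉ l.toFinset := fun h => hyl (List.mem_toFinset.mp h)
    have hxT : x ∉ l.toFinset := fun h => hx (List.mem_toFinset.mp h)
    show perList w d r l + w x + distR d r l.toFinset x + w y +
        distR d r (x :: l).toFinset y =
      perList w d r l + w y + distR d r l.toFinset y + w x +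
        distR d r (y :: l).toFinset x
    rw [List.toFinset_cons, List.toFinset_cons]
    have := distR_exchange d r hsymm hultra (a := x) (b := y) hxT hyT hyx.symm
    linarith
  | trans h₁ h₂ ih₁ ih₂ =>
    intro hnd
    rw [ih₁ hnd, ih₂ (h₁.nodup hnd)]

include hsymm hultra in
lemma perR_insert {x : E} {C : Finset E} (hx : x ∉ C) :
    perR w d r (insert x C) = perR w d r C + w x + distR d r C x := by
  unfold perR
  rw [perList_perm w d r hsymm hultra (Finset.toList_insert hx) (Finset.nodup_toList _)]
  show perList w d r C.toList + w x + distR d r C.toList.toFinset x = _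
  rw [Finset.toList_toFinset]

end Aux2

section Aux3
variable {E : Type*} [DecidableEq E] (d : E → E → ℝ) (r : ℕ)

lemma distR_le_of_seq {k : ℕ} {v b : ℕ → E} (hv : Set.InjOn v (Finset.range k))
    (hb : Set.InjOn b (Finset.range k)) {x y : E}
    (hd : ∀ j < k, d x (v j) ≤ d y (b j)) :
    distR d r ((Finset.range k).image v) x ≤ distR d r ((Finset.range k).image b) y := by
  obtain ⟨T, hTsub, hTc, hTeq⟩ := distR_exists d r ((Finset.range k).image v) x
  rw [hTeq]
  set J := (Finset.range k).filter (fun j => v j ∈ T) with hJ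
  have hJsub : J ⊆ Finset.range k := filter_subset _ _
  have hJv : J.image v = T := by
    apply Finset.Subset.antisymm
    · intro t ht
      rw [mem_image] at ht
      obtain ⟨j, hj, rfl⟩ := ht
      exact (mem_filter.mp hj).2
    · intro t ht
      have := hTsub ht
      rw [mem_image] at this
      obtain ⟨j, hj, rfl⟩ := this
      exact mem_image_of_mem _ (mem_filter.mpr ⟨hj, ht⟩)
  have hvJ : Set.InjOn v J := hv.mono (by exact_mod_cast hJsub)
  have hbJ : Set.InjOn b J := hb.mono (by exact_mod_cast hJsub)
  have h1 : ∑ t ∈ T, d x t = ∑ j ∈ J, d x (v j) := by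
    rw [← hJv]
    exact sum_image (fun a ha b hb h => hvJ ha hb h)
  have h2 : ∑ j ∈ J, d x (v j) ≤ ∑ j ∈ J, d y (b j) := by
    apply sum_le_sum
    intro j hj
    exact hd j (mem_range.mp (hJsub hj))
  have h3 : ∑ j ∈ J, d y (b j) = ∑ t ∈ J.image b, d y t :=
    (sum_image (fun a ha b hb h => hbJ ha hb h)).symm
  have hcv : ((Finset.range k).image v).card = k := by
    rw [card_image_of_injOn hv, card_range]
  have hcb : ((Finset.range k).image b).card = k := by
    rw [card_image_of_injOn hb, card_range]
  have hJb : (J.image b).card = T.card := by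
    rw [card_image_of_injOn hbJ, ← card_image_of_injOn hvJ, hJv]
  have h4 : ∑ t ∈ J.image b, d y t ≤ distR d r ((Finset.range k).image b) y := by
    apply le_distR
    · exact (image_subset_image hJsub)
    · rw [hJb, hTc, hcv, hcb]
  linarith

noncomputable def projC (d : E → E → ℝ) (S : Finset E) (x : E) : E :=
  if x ∈ S then x
  else if hS : S.Nonempty then (S.exists_min_image (d x) hS).choose
  else x

lemma projC_mem {S : Finset E} (hS : S.Nonempty) (x : E) : projC d S x ∈ S := by
  unfold projC
  split_ifs with h1
  · exact h1
  · exact (S.exists_min_image (d x) hS).choose_spec.1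

lemma projC_eq_self {S : Finset E} {x : E} (hx : x ∈ S) : projC d S x = x := by
  unfold projC; rw [if_pos hx]

lemma projC_min {S : Finset E} {x : E} (hx : x ∉ S) (hS : S.Nonempty) :
    ∀ y ∈ S, d x (projC d S x) ≤ d x y := by
  unfold projC
  rw [if_neg hx, dif_pos hS]
  exact (S.exists_min_image (d x) hS).choose_spec.2

lemma projC_contract (hsymm : ∀ a b : E, a ≠ b → d a b = d b a)
    (hultra : ∀ a b c : E, a ≠ b → a ≠ c → b ≠ c → d a b ≤ max (d a c) (d b c))
    {S : Finset E} (hS : S.Nonempty) {x y : E} (hy : y ∈ S)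
    (hyp : y ≠ projC d S x) : d (projC d S x) y ≤ d x y := by
  by_cases hx : x ∈ S
  · rw [projC_eq_self d hx]
  · set p := projC d S x with hp
    have hpS : p ∈ S := projC_mem d hS x
    have hpx : p ≠ x := fun h => hx (h ▸ hpS)
    have hyx : y ≠ x := fun h => hx (h ▸ hy)
    have h1 : d p y ≤ max (d p x) (d y x) := hultra p y x hyp.symm hpx hyx
    have h2 : d p x = d x p := hsymm p x hpx
    have h3 : d y x = d x y := hsymm y x hyx
    have h4 : d x p ≤ d x y := projC_min d hx hS y hy
    rw [h2, h3] at h1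
    exact h1.trans (max_le h4 le_rfl)

end Aux3

section Aux4
variable {E : Type*} [DecidableEq E] (d : E → E → ℝ) (r : ℕ)

lemma key_metric (hsymm : ∀ a b : E, a ≠ b → d a b = d b a)
    (hultra : ∀ a b c : E, a ≠ b → a ≠ c → b ≠ c → d a b ≤ max (d a c) (d b c))
    {A B : Finset E} (hcard : A.card = B.card + 1) :
    ∃ a ∈ A \ B, distR d r (A.erase a) a ≤ distR d r B a := by
  set k := B.card with hk
  have hAne : A.Nonempty := card_pos.mp (by omega)
  obtain ⟨a₀, ha₀⟩ := hAne
  set b : ℕ → E := fun i => B.toList.getD i a₀ with hbdef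
  have hblen : B.toList.length = k := Finset.length_toList B
  have hbget : ∀ i, (hi : i < B.toList.length) → b i = B.toList[i]'hi := by
    intro i hi
    simp only [hbdef]
    rw [List.getD_eq_getElem _ _ hi]
  have hbmem : ∀ i < k, b i ∈ B := by
    intro i hi
    rw [hbget i (by omega)]
    exact Finset.mem_toList.mp (List.getElem_mem _)
  have hbinj : ∀ i < k, ∀ j < k, b i = b j → i = j := by
    intro i hi j hj h
    rw [hbget i (by omega), hbget j (by omega)] at h
    exact (List.Nodup.getElem_inj_iff (Finset.nodup_toList B)).mp h
  have hbimg : (Finset.range k).image b = B := by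
    apply Finset.Subset.antisymm
    · intro x hx
      rw [mem_image] at hx
      obtain ⟨i, hi, rfl⟩ := hx
      exact hbmem i (mem_range.mp hi)
    · intro x hx
      have hxl : x ∈ B.toList := Finset.mem_toList.mpr hx
      rw [List.mem_iff_getElem] at hxl
      obtain ⟨i, hi, hieq⟩ := hxl
      have hik : i < k := by omega
      rw [mem_image]
      refine ⟨i, mem_range.mpr hik, ?_⟩
      rw [hbget i hi]
      exact hieq
  have main : ∀ n, n ≤ k → ∃ v : ℕ → E,
      (∀ j1 < n, ∀ j2 < n, v j1 = v j2 → j1 = j2) ∧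
      (∀ j < n, v j ∈ A) ∧
      (∀ j < n, ∀ y ∈ A, (∀ t, t ≤ j → y ≠ v t) → d (v j) y ≤ d (b j) y) ∧
      (∀ j < n, b j ∈ A → (∀ t < j, b j ≠ v t) → v j = b j) := by
    intro n
    induction n with
    | zero => exact fun _ => ⟨fun _ => a₀, by omega, by omega, by omega, by omega⟩
    | succ n ih =>
      intro hik
      obtain ⟨v, hinj, hmem, hcontr, hfix⟩ := ih (by omega)
      set Vi := (Finset.range n).image v with hVi
      have hViA : Vi ⊆ A := by
        intro x hx
        rw [hVi, mem_image] at hx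
        obtain ⟨j, hj, rfl⟩ := hx
        exact hmem j (mem_range.mp hj)
      have hVicard : Vi.card ≤ n := le_trans (card_image_le) (by rw [card_range])
      set S := A \ Vi with hS
      have hSne : S.Nonempty := by
        rw [hS, ← card_pos, card_sdiff_of_subset hViA]
        omega
      set p := projC d S (b n) with hp
      have hpS : p ∈ S := projC_mem d hSne _
      have hpA : p ∈ A := (mem_sdiff.mp hpS).1
      have hpVi : p ∉ Vi := (mem_sdiff.mp hpS).2
      set v' := Function.update v n p with hv'
      have hupd : ∀ t, t < n → v' t = v t := by
        intro t ht
        rw [hv']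
        exact Function.update_of_ne (by omega) _ _
      have hupdn : v' n = p := by rw [hv']; exact Function.update_self _ _ _
      refine ⟨v', ?_, ?_, ?_, ?_⟩
      · intro j1 hj1 j2 hj2 h
        rcases Nat.lt_or_ge j1 n with h1 | h1 <;> rcases Nat.lt_or_ge j2 n with h2 | h2
        · rw [hupd j1 h1, hupd j2 h2] at h
          exact hinj j1 h1 j2 h2 h
        · have hj2n : j2 = n := by omega
          subst hj2n
          rw [hupd j1 h1, hupdn] at h
          exact absurd (hVi ▸ mem_image_of_mem v (mem_range.mpr h1) : v j1 ∈ Vi)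
            (h ▸ hpVi)
        · have hj1n : j1 = n := by omega
          subst hj1n
          rw [hupd j2 h2, hupdn] at h
          exact absurd (hVi ▸ mem_image_of_mem v (mem_range.mpr h2) : v j2 ∈ Vi)
            (h ▸ hpVi)
        · omega
      · intro j hj
        rcases Nat.lt_or_ge j n with h1 | h1
        · rw [hupd j h1]
          exact hmem j h1
        · have : j = n := by omega
          subst this
          rw [hupdn]
          exact hpA
      · intro j hj y hyA hyv
        rcases Nat.lt_or_ge j n with h1 | h1
        · rw [hupd j h1]
          apply hcontr j h1 y hyA
          intro t ht
          have h2 := hyv t ht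
          rwa [hupd t (by omega)] at h2
        · have : j = n := by omega
          subst this
          rw [hupdn]
          have hyS : y ∈ S := by
            rw [hS, mem_sdiff]
            refine ⟨hyA, ?_⟩
            intro hyVi
            rw [hVi, mem_image] at hyVi
            obtain ⟨t, ht, hteq⟩ := hyVi
            have htn := mem_range.mp ht
            exact hyv t (by omega) (by rw [hupd t htn]; exact hteq.symm)
          have hyp : y ≠ p := by
            have h3 := hyv j le_rfl
            rwa [hupdn] at h3
          exact projC_contract d hsymm hultra hSne hyS hyp
      · intro j hj hbA hbv
        rcases Nat.lt_or_ge j n with h1 | h1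
        · rw [hupd j h1]
          apply hfix j h1 hbA
          intro t ht
          have h2 := hbv t ht
          rwa [hupd t (by omega)] at h2
        · have : j = n := by omega
          subst this
          rw [hupdn, hp]
          apply projC_eq_self
          rw [hS, mem_sdiff]
          refine ⟨hbA, ?_⟩
          intro hbVi
          rw [hVi, mem_image] at hbVi
          obtain ⟨t, ht, hteq⟩ := hbVi
          have htn := mem_range.mp ht
          exact hbv t htn (by rw [hupd t htn]; exact hteq.symm)
  obtain ⟨v, hinj, hmem, hcontr, hfix⟩ := main k le_rfl
  set Vk := (Finset.range k).image v with hVk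
  have hinjOn : Set.InjOn v (Finset.range k) := by
    intro x hx y hy h
    exact hinj x (mem_range.mp (by exact_mod_cast hx)) y (mem_range.mp (by exact_mod_cast hy)) h
  have hVkA : Vk ⊆ A := by
    intro x hx
    rw [hVk, mem_image] at hx
    obtain ⟨j, hj, rfl⟩ := hx
    exact hmem j (mem_range.mp hj)
  have hVkcard : Vk.card = k := by
    rw [hVk, card_image_of_injOn hinjOn, card_range]
  have hAVk : (A \ Vk).card = 1 := by
    rw [card_sdiff_of_subset hVkA]
    omega
  obtain ⟨a, ha⟩ := card_eq_one.mp hAVk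
  have haAVk : a ∈ A \ Vk := by rw [ha]; exact mem_singleton_self a
  have haA : a ∈ A := (mem_sdiff.mp haAVk).1
  have haVk : a ∉ Vk := (mem_sdiff.mp haAVk).2
  have havt : ∀ t < k, a ≠ v t := by
    intro t ht h
    apply haVk
    rw [hVk, mem_image]
    exact ⟨t, mem_range.mpr ht, h.symm⟩
  have haB : a ∉ B := by
    intro hB
    rw [← hbimg, mem_image] at hB
    obtain ⟨i, hi, hieq⟩ := hB
    have hik := mem_range.mp hi
    have hvb : v i = b i := by
      apply hfix i hik (by rw [hieq]; exact haA)
      intro t ht h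
      exact havt t (by omega) (by rw [← hieq, h])
    exact havt i hik (by rw [hvb, hieq])
  have herase : A.erase a = Vk := by
    ext x
    rw [mem_erase]
    constructor
    · rintro ⟨hxa, hxA⟩
      by_contra hxVk
      have hx : x ∈ A \ Vk := mem_sdiff.mpr ⟨hxA, hxVk⟩
      rw [ha, mem_singleton] at hx
      exact hxa hx
    · intro hx
      exact ⟨fun h => haVk (h ▸ hx), hVkA hx⟩
  refine ⟨a, mem_sdiff.mpr ⟨haA, haB⟩, ?_⟩
  rw [herase, ← hbimg]
  apply distR_le_of_seq d r hinjOn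
  · intro x hx y hy h
    exact hbinj x (mem_range.mp (by exact_mod_cast hx)) y (mem_range.mp (by exact_mod_cast hy)) h
  · intro j hj
    have havj : a ≠ v j := havt j hj
    have habj : a ≠ b j := fun h => haB (h ▸ hbmem j hj)
    have h1 : d (v j) a ≤ d (b j) a := by
      apply hcontr j hj a haA
      intro t ht
      exact havt t (by omega)
    rw [hsymm a (v j) havj, hsymm a (b j) habj]
    exact h1

end Aux4

/-- `b` is a projection of `c` onto the finite set `A`. -/
def IsProj {E : Type*} [DecidableEq E] (d : E → E → ℝ) (A : Finset E) (c b : E) : Prop :=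
  (c ∈ A ∧ b = c) ∨ (c ∉ A ∧ b ∈ A ∧ ∀ x ∈ A, d c b ≤ d c x)

/-- `v` is a sequential projection of the ordered set `c` (of length `k`) onto `A`. -/
def IsSeqProj {E : Type*} [DecidableEq E] (d : E → E → ℝ) (A : Finset E)
    (k : ℕ) (c v : ℕ → E) : Prop :=
  ∀ i < k, IsProj d (A \ (Finset.range i).image v) (c i) (v i)

/-- `c` is a greedy `r`-removed `m`-permutation of `C`. -/
def IsGreedy {E : Type*} [DecidableEq E] (w : E → ℝ) (d : E → E → ℝ) (r : ℕ)
    (C : Finset E) (m : ℕ) (c : ℕ → E) : Prop :=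
  (∀ i < m, c i ∈ C) ∧ (∀ i < m, ∀ j < m, c i = c j → i = j) ∧
  ∀ i < m, ∀ x ∈ C, x ∉ (Finset.range i).image c →
    perR w d r (insert x ((Finset.range i).image c)) ≤
      perR w d r (insert (c i) ((Finset.range i).image c))

noncomputable def distF {E : Type*} [DecidableEq E] (d : E → E → ℝ)
    (f : ℕ → ℝ → ℝ) (C : Finset E) (x : E) : ℝ :=
  let l := (C.toList.map (fun c => d x c)).insertionSort (· ≤ ·)
  ∑ i ∈ Finset.range l.length, f (i + 1) (l.getD i 0)

theorem stmt9 {E : Type*} [DecidableEq E] [Fintype E] (w : E → ℝ) (d : E → E → ℝ)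
    (hsymm : ∀ a b : E, a ≠ b → d a b = d b a)
    (hultra : ∀ a b c : E, a ≠ b → a ≠ c → b ≠ c → d a b ≤ max (d a c) (d b c))
    (r : ℕ) (F : Finset E → Prop)
    (hF : ∀ A, F A ↔ ∀ B : Finset E, B.card = A.card → perR w d r B ≤ perR w d r A) :
    F ∅ ∧
    (∀ A, F A → A.Nonempty → ∃ a ∈ A, F (A.erase a)) ∧
    (∀ A B, F A → F B → A.card = B.card + 1 → ∃ a ∈ A \ B, F (insert a B)) ∧
    (∀ A B, F A → F B → A.card = B.card + 1 →
      ∃ a ∈ A \ B, F (insert a B) ∧ F (A.erase a)) := by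
  have hmain : ∀ A B : Finset E, F A → F B → A.card = B.card + 1 →
      ∃ a ∈ A \ B, F (insert a B) ∧ F (A.erase a) := by
    intro A B hA hB hcard
    obtain ⟨a, haAB, hdist⟩ := key_metric d r hsymm hultra hcard
    have haA : a ∈ A := (mem_sdiff.mp haAB).1
    have haB : a ∉ B := (mem_sdiff.mp haAB).2
    have hBlt : B.card < Fintype.card E := by
      have := card_le_univ A
      omega
    have hBu : (Finset.univ \ B).Nonempty := by
      rw [← card_pos, card_sdiff_of_subset (subset_univ _), Finset.card_univ]
      omega
    obtain ⟨xs, hxsmem, hxsmax⟩ :=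
      Finset.exists_max_image (Finset.univ \ B) (fun x => perR w d r (insert x B)) hBu
    have hxsB : xs ∉ B := (mem_sdiff.mp hxsmem).2
    have e1 : perR w d r A = perR w d r (A.erase a) + w a + distR d r (A.erase a) a := by
      rw [← perR_insert w d r hsymm hultra (notMem_erase a A), insert_erase haA]
    have hcardsE : (A.erase a).card = B.card := by
      rw [card_erase_of_mem haA]; omega
    have e2 : perR w d r (A.erase a) ≤ perR w d r B := (hF B).mp hB _ hcardsE
    have e3 : perR w d r (insert a B) = perR w d r B + w a + distR d r B a :=
      perR_insert w d r hsymm hultra haB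
    have e4 : perR w d r (insert a B) ≤ perR w d r (insert xs B) :=
      hxsmax a (mem_sdiff.mpr ⟨mem_univ a, haB⟩)
    have e5 : perR w d r (insert xs B) ≤ perR w d r A :=
      (hF A).mp hA _ (by rw [card_insert_of_notMem hxsB]; omega)
    have h6 : perR w d r A ≤ perR w d r (insert a B) := by
      rw [e1, e3]; linarith
    have h7 : perR w d r (insert a B) = perR w d r A := le_antisymm (e4.trans e5) h6
    have h8 : perR w d r (A.erase a) = perR w d r B := by
      rw [e1] at h7; rw [e3] at h7; linarith
    refine ⟨a, haAB, ?_, ?_⟩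
    · rw [hF]
      intro D hD
      have hDA : D.card = A.card := by
        rw [hD, card_insert_of_notMem haB]; omega
      have := (hF A).mp hA D hDA
      linarith
    · rw [hF]
      intro D hD
      have hDB : D.card = B.card := by rw [hD, hcardsE]
      have := (hF B).mp hB D hDB
      linarith
  have hempty : F ∅ := by
    rw [hF]
    intro B hB
    rw [card_empty, card_eq_zero] at hB
    rw [hB]
  refine ⟨hempty, ?_, ?_, ?_⟩
  · intro A hA hAne
    have hA1 : 1 ≤ A.card := card_pos.mpr hAne
    have hAle : A.card ≤ Fintype.card E := by
      have := card_le_univ A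
      simpa only [Finset.card_univ] using this
    have hpne : ((Finset.univ : Finset E).powersetCard (A.card - 1)).Nonempty := by
      rw [powersetCard_nonempty, Finset.card_univ]
      omega
    obtain ⟨B₀, hB₀mem, hB₀max⟩ :=
      Finset.exists_max_image _ (fun D => perR w d r D) hpne
    have hB₀card : B₀.card = A.card - 1 := (mem_powersetCard.mp hB₀mem).2
    have hB₀ : F B₀ := by
      rw [hF]
      intro D hD
      exact hB₀max D (mem_powersetCard.mpr ⟨subset_univ _, by omega⟩)
    obtain ⟨a, haAB, _, hFer⟩ := hmain A B₀ hA hB₀ (by omega)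
    exact ⟨a, (mem_sdiff.mp haAB).1, hFer⟩
  · intro A B hA hB hcard
    obtain ⟨a, haAB, hFins, _⟩ := hmain A B hA hB hcard
    exact ⟨a, haAB, hFins⟩
  · exact hmain
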